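/- Suppose Assumptions A, B and C-1 hold and let (x^r, y^r) be generated by HiBSA (strongly concave case) with γ^r = 0 and constant β^r = β > 0. Then for every iteration r, ℓ(x^{r+1}, y^r) − ℓ(x^r, y^r) ≤ −Σ_{i=1}^K (β + μ_i − L_{x_i}/2) ‖x_i^{r+1} − x_i^r‖². -/

import Mathlib

open scoped RealInnerProductSpace

/-- The `i`-th block space `ℝ^N`. -/
abbrev Blk (N : ℕ) : Type := EuclideanSpace ℝ (Fin N)

/-- The full `x`-space `ℝ^{NK}`, with the Euclidean (ℓ²) product norm. -/
abbrev XVec (N K : ℕ) : Type := PiLp 2 (fun _ : Fin K => Blk N)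

/-- The `y`-space `ℝ^M`. -/
abbrev YVec (M : ℕ) : Type := EuclideanSpace ℝ (Fin M)

/-- `hibsaW xs r i = w_i^{r+1} = (x_1^{r+1},…,x_{i−1}^{r+1}, x_i^r,…,x_K^r)`. -/
noncomputable def hibsaW {N K : ℕ} (xs : ℕ → XVec N K) (r : ℕ) (i : Fin K) : XVec N K :=
  WithLp.toLp 2 (fun j : Fin K => if (j : ℕ) < (i : ℕ) then xs (r + 1) j else xs r j)

/-- Replace the `i`-th block of `x` by `z`. -/
noncomputable def blockUpdate {N K : ℕ} (x : XVec N K) (i : Fin K) (z : Blk N) : XVec N K :=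
  WithLp.toLp 2 (Function.update x i z)

open Set

private lemma aux_limit {c e A : ℝ} (h : ∀ t : ℝ, 0 < t → t ≤ 1 → c ≤ e + A * t) : c ≤ e := by
  rcases le_or_gt A 0 with hA | hA
  · have := h 1 one_pos le_rfl
    nlinarith
  · apply le_of_forall_pos_le_add
    intro ε hε
    have ht0 : 0 < min 1 (ε / A) := lt_min one_pos (div_pos hε hA)
    have := h _ ht0 (min_le_left _ _)
    have h2 : A * min 1 (ε / A) ≤ ε := by
      have : min 1 (ε / A) ≤ ε / A := min_le_right _ _
      calc A * min 1 (ε / A) ≤ A * (ε / A) := by nlinarith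
        _ = ε := by field_simp
    linarith

private lemma descent_1d (φ d : ℝ → ℝ) (L : ℝ)
    (hd : ∀ t ∈ Icc (0:ℝ) 1, HasDerivAt φ (d t) t)
    (hL : ∀ s ∈ Icc (0:ℝ) 1, ∀ t ∈ Icc (0:ℝ) 1, |d t - d s| ≤ L * |t - s|) :
    φ 1 - φ 0 ≤ d 0 + L / 2 := by
  have hL0 : 0 ≤ L := by
    have h1 := hL 0 ⟨le_rfl, by norm_num⟩ 1 ⟨by norm_num, le_rfl⟩
    have : |1 - (0:ℝ)| = 1 := by norm_num
    rw [this, mul_one] at h1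
    linarith [abs_nonneg (d 1 - d 0)]
  have hcont : ContinuousOn d (Icc 0 1) := by
    apply LipschitzOnWith.continuousOn (K := Real.toNNReal L)
    intro s hs t ht
    rw [edist_dist, edist_dist, Real.dist_eq, Real.dist_eq]
    calc ENNReal.ofReal |d s - d t| ≤ ENNReal.ofReal (L * |s - t|) := by
          exact ENNReal.ofReal_le_ofReal (hL t ht s hs)
      _ ≤ (Real.toNNReal L) * ENNReal.ofReal |s - t| := by
          rw [ENNReal.ofReal_mul hL0, ENNReal.ofReal]
  have hint : IntervalIntegrable d MeasureTheory.volume 0 1 := by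
    apply ContinuousOn.intervalIntegrable
    rwa [uIcc_of_le (by norm_num : (0:ℝ) ≤ 1)]
  have heq : ∫ t in (0:ℝ)..1, d t = φ 1 - φ 0 := by
    apply intervalIntegral.integral_eq_sub_of_hasDerivAt
    · intro t ht
      exact hd t (by rwa [uIcc_of_le (by norm_num : (0:ℝ) ≤ 1)] at ht)
    · exact hint
  have hmono : ∫ t in (0:ℝ)..1, d t ≤ ∫ t in (0:ℝ)..1, (d 0 + L * t) := by
    apply intervalIntegral.integral_mono_on (by norm_num) hint
    · exact ((continuous_const.add (by continuity : Continuous fun t : ℝ => L * t))).intervalIntegrable _ _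
    · intro t ht
      have h1 := hL 0 (by norm_num) t ht
      have : |d t - d 0| ≤ L * t := by
        rwa [sub_zero, abs_of_nonneg ht.1] at h1
      have := abs_le.1 this
      linarith [this.2]
  have hval : ∫ t in (0:ℝ)..1, (d 0 + L * t) = d 0 + L / 2 := by
    rw [intervalIntegral.integral_add intervalIntegrable_const
      ((by continuity : Continuous fun t : ℝ => L * t).intervalIntegrable _ _)]
    rw [intervalIntegral.integral_const]
    have : ∫ t in (0:ℝ)..1, L * t = L / 2 := by
      rw [intervalIntegral.integral_const_mul, integral_id]
      ring
    rw [this]; simp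
  linarith [heq ▸ hmono, hval ▸ hmono]

private lemma descent_general {E : Type*} [NormedAddCommGroup E] [InnerProductSpace ℝ E]
    [CompleteSpace E] (φ : E → ℝ) (G : E → E) (a b : E) (C : ℝ)
    (hG : ∀ t ∈ Icc (0:ℝ) 1, HasGradientAt φ (G (a + t • (b - a))) (a + t • (b - a)))
    (hLip : ∀ s ∈ Icc (0:ℝ) 1, ∀ t ∈ Icc (0:ℝ) 1,
      |⟪G (a + t • (b - a)) - G (a + s • (b - a)), b - a⟫| ≤ C * |t - s|) :
    φ b ≤ φ a + ⟪G a, b - a⟫ + C / 2 := by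
  set c : ℝ → E := fun t => a + t • (b - a) with hc
  have hcderiv : ∀ t : ℝ, HasDerivAt c (b - a) t := by
    intro t
    have := ((hasDerivAt_id t).smul_const (b - a)).const_add a
    simp only [one_smul] at this
    exact this
  set d : ℝ → ℝ := fun t => ⟪G (c t), b - a⟫ with hdd
  have hd : ∀ t ∈ Icc (0:ℝ) 1, HasDerivAt (φ ∘ c) (d t) t := by
    intro t ht
    have h1 := (hG t ht).hasFDerivAt
    have h2 := h1.comp_hasDerivAt t (hcderiv t)
    simpa [d, InnerProductSpace.toDual_apply_apply] using h2
  have hL' : ∀ s ∈ Icc (0:ℝ) 1, ∀ t ∈ Icc (0:ℝ) 1, |d t - d s| ≤ C * |t - s| := by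
    intro s hs t ht
    have h1 : d t - d s = ⟪G (c t) - G (c s), b - a⟫ := by
      simp [d, inner_sub_left]
    rw [h1]
    exact hLip s hs t ht
  have := descent_1d (φ ∘ c) d C hd hL'
  have hc1 : c 1 = b := by simp [c]
  have hc0 : c 0 = a := by simp [c]
  have hd0 : d 0 = ⟪G a, b - a⟫ := by simp [d, hc0]
  simp only [Function.comp] at this
  rw [hc1, hc0, hd0] at this
  linarith


set_option maxHeartbeats 1000000 in
private lemma per_block {N K M : ℕ}
    (f : XVec N K → YVec M → ℝ)
    (Xi : Fin K → Set (Blk N)) (hXiconv : ∀ i, Convex ℝ (Xi i))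
    (h : Fin K → Blk N → ℝ) (hhconv : ∀ i, ConvexOn ℝ Set.univ (h i))
    (Gfx : XVec N K → YVec M → XVec N K)
    (hGfx : ∀ x y, HasGradientAt (fun z => f z y) (Gfx x y) x)
    (Lx : ℝ) (i : Fin K) (y : YVec M)
    (U : Blk N → ℝ) (GU : Blk N → Blk N)
    (hGU : ∀ z, HasGradientAt U (GU z) z)
    (μ Lu β : ℝ)
    (hB1 : ∀ z z', z ∈ Xi i → z' ∈ Xi i →
      ⟪GU z', z - z'⟫ + μ / 2 * ‖z - z'‖ ^ 2 ≤ U z - U z')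
    (hB4 : ∀ z z', ‖GU z - GU z'‖ ≤ Lu * ‖z - z'‖)
    (w : XVec N K) (hwfeas : ∀ j, w j ∈ Xi j)
    (a b : Blk N) (hwa : w i = a) (ha : a ∈ Xi i) (hb : b ∈ Xi i)
    (hGcons : GU a = Gfx w y i)
    (hLxw : ∀ x x' : XVec N K, (∀ j, x j ∈ Xi j) → (∀ j, x' j ∈ Xi j) →
      ‖Gfx x' y i - Gfx x y i‖ ≤ Lx * ‖x' - x‖)
    (hmin : ∀ z ∈ Xi i, U b + h i b + β / 2 * ‖b - a‖ ^ 2 ≤ U z + h i z + β / 2 * ‖z - a‖ ^ 2) :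
    f (blockUpdate w i b) y + h i b - f w y - h i a
      ≤ -((β + μ - Lx / 2) * ‖b - a‖ ^ 2) := by
  classical
  set w' : XVec N K := blockUpdate w i b with hw'
  set v : XVec N K := w' - w with hv
  have hvj : ∀ j : Fin K, j ≠ i → v j = 0 := by
    intro j hj
    simp [v, w', blockUpdate, Function.update_apply, hj, PiLp.sub_apply]
  have hvi : v i = b - a := by
    simp [v, w', blockUpdate, PiLp.sub_apply, hwa]
  have hinner : ∀ u : XVec N K, ⟪u, v⟫ = ⟪u i, b - a⟫ := by
    intro u
    rw [PiLp.inner_apply]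
    rw [Finset.sum_eq_single i]
    · rw [hvi]
    · intro j _ hj
      rw [hvj j hj, inner_zero_right]
    · simp
  have hvnorm : ‖v‖ = ‖b - a‖ := by
    have h1 : ‖v‖ ^ 2 = ‖b - a‖ ^ 2 := by
      rw [← real_inner_self_eq_norm_sq, ← real_inner_self_eq_norm_sq, hinner, hvi]
    calc ‖v‖ = Real.sqrt (‖v‖ ^ 2) := by rw [Real.sqrt_sq (norm_nonneg _)]
      _ = Real.sqrt (‖b - a‖ ^ 2) := by rw [h1]
      _ = ‖b - a‖ := Real.sqrt_sq (norm_nonneg _)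
  -- feasibility along the segment
  have hsegfeas : ∀ t : ℝ, t ∈ Icc (0:ℝ) 1 → ∀ j, (w + t • v) j ∈ Xi j := by
    intro t ht j
    rcases eq_or_ne j i with rfl | hj
    · have : (w + t • v) j = (1 - t) • a + t • b := by
        rw [PiLp.add_apply, PiLp.smul_apply, hvi, hwa]
        rw [smul_sub, sub_smul, one_smul]
        abel
      rw [this]
      exact hXiconv j ha hb (by linarith [ht.1, ht.2]) ht.1 (by ring)
    · have : (w + t • v) j = w j := by
        rw [PiLp.add_apply, PiLp.smul_apply, hvj j hj, smul_zero, add_zero]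
      rw [this]
      exact hwfeas j
  -- (P1) block descent lemma for f
  have hP1 : f w' y ≤ f w y + ⟪GU a, b - a⟫ + Lx * ‖b - a‖ ^ 2 / 2 := by
    have hsub : w' - w = v := rfl
    have hD := descent_general (fun z => f z y) (fun z => Gfx z y) w w' (Lx * ‖b - a‖ ^ 2)
      (fun t _ => by rw [hsub]; exact hGfx _ y)
      ?_
    · rw [hsub, hinner] at hD
      beta_reduce at hD
      rw [← hGcons] at hD
      linarith [hD]
    · intro s hs t ht
      rw [hsub]
      have hfeas_t := hsegfeas t ht
      have hfeas_s := hsegfeas s hs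
      have hdiff : (w + t • v) - (w + s • v) = (t - s) • v := by
        rw [sub_smul]; abel
      have h1 : ⟪Gfx (w + t • v) y - Gfx (w + s • v) y, v⟫
          = ⟪Gfx (w + t • v) y i - Gfx (w + s • v) y i, b - a⟫ := by
        rw [hinner, PiLp.sub_apply]
      rw [h1]
      calc |⟪Gfx (w + t • v) y i - Gfx (w + s • v) y i, b - a⟫|
          ≤ ‖Gfx (w + t • v) y i - Gfx (w + s • v) y i‖ * ‖b - a‖ :=
            abs_real_inner_le_norm _ _
        _ ≤ (Lx * ‖(w + t • v) - (w + s • v)‖) * ‖b - a‖ :=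
            mul_le_mul_of_nonneg_right (hLxw _ _ hfeas_s hfeas_t) (norm_nonneg _)
        _ = Lx * ‖b - a‖ ^ 2 * |t - s| := by
            rw [hdiff, norm_smul, Real.norm_eq_abs, hvnorm]; ring
  -- (P3) strong monotonicity
  have hP3 : ⟪GU a, b - a⟫ ≤ ⟪GU b, b - a⟫ - μ * ‖b - a‖ ^ 2 := by
    have h31 := hB1 a b ha hb
    have h32 := hB1 b a hb ha
    have hab : a - b = -(b - a) := by abel
    rw [hab, inner_neg_right, norm_neg] at h31
    linarith
  -- (P4) optimality inequality
  have hP4 : ⟪GU b, b - a⟫ ≤ h i a - h i b - β * ‖b - a‖ ^ 2 := by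
    have hkey : ∀ t : ℝ, 0 < t → t ≤ 1 →
        ⟪GU b, b - a⟫ - (h i a - h i b - β * ‖b - a‖ ^ 2)
          ≤ 0 + ((Lu + β) / 2 * ‖b - a‖ ^ 2) * t := by
      intro t ht0 ht1
      set z : Blk N := b + t • (a - b) with hz
      have hzeq : z = (1 - t) • b + t • a := by
        rw [hz, smul_sub, sub_smul, one_smul]; abel
      have hzfeas : z ∈ Xi i := by
        rw [hzeq]
        exact hXiconv i hb ha (by linarith) (le_of_lt ht0) (by ring)
      have hUz : U z ≤ U b + ⟪GU b, z - b⟫ + (Lu * ‖z - b‖ ^ 2) / 2 := by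
        have hD := descent_general U GU b z (Lu * ‖z - b‖ ^ 2)
          (fun t' _ => hGU _) ?_
        · linarith [hD]
        · intro s' hs' t' ht'
          have hdiff : (b + t' • (z - b)) - (b + s' • (z - b)) = (t' - s') • (z - b) := by
            rw [sub_smul]; abel
          calc |⟪GU (b + t' • (z - b)) - GU (b + s' • (z - b)), z - b⟫|
              ≤ ‖GU (b + t' • (z - b)) - GU (b + s' • (z - b))‖ * ‖z - b‖ :=
                abs_real_inner_le_norm _ _
            _ ≤ (Lu * ‖(b + t' • (z - b)) - (b + s' • (z - b))‖) * ‖z - b‖ :=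
                mul_le_mul_of_nonneg_right (hB4 _ _) (norm_nonneg _)
            _ = Lu * ‖z - b‖ ^ 2 * |t' - s'| := by
                rw [hdiff, norm_smul, Real.norm_eq_abs]; ring
      have hzb : z - b = t • (a - b) := by rw [hz]; abel
      have hzbnorm : ‖z - b‖ ^ 2 = t ^ 2 * ‖b - a‖ ^ 2 := by
        rw [hzb, norm_smul, Real.norm_eq_abs, abs_of_pos ht0, mul_pow, norm_sub_rev a b]
      have hinz : ⟪GU b, z - b⟫ = t * ⟪GU b, a - b⟫ := by
        rw [hzb, real_inner_smul_right]
      have hza : z - a = (1 - t) • (b - a) := by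
        rw [hzeq, smul_sub, sub_smul, sub_smul, one_smul, one_smul]; abel
      have hzanorm : ‖z - a‖ ^ 2 = (1 - t) ^ 2 * ‖b - a‖ ^ 2 := by
        rw [hza, norm_smul, Real.norm_eq_abs, abs_of_nonneg (by linarith : (0:ℝ) ≤ 1 - t), mul_pow]
      have hconv : h i z ≤ (1 - t) * h i b + t * h i a := by
        have := (hhconv i).2 (Set.mem_univ b) (Set.mem_univ a)
          (by linarith : (0:ℝ) ≤ 1 - t) (le_of_lt ht0) (by ring)
        rw [← hzeq] at this
        exact this
      have hm := hmin z hzfeas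
      rw [hzanorm] at hm
      rw [hinz, hzbnorm] at hUz
      have habneg : ⟪GU b, b - a⟫ = -⟪GU b, a - b⟫ := by
        rw [show b - a = -(a - b) by abel, inner_neg_right]
      have hstep : t * (⟪GU b, b - a⟫ - (h i a - h i b - β * ‖b - a‖ ^ 2))
          ≤ t * (((Lu + β) / 2 * ‖b - a‖ ^ 2) * t) := by
        rw [habneg]
        nlinarith [hm, hUz, hconv]
      have := le_of_mul_le_mul_left hstep ht0
      linarith [this]
    have := aux_limit hkey
    linarith
  linarith


/-- **Lemma 1 (descent on `x`)** for HiBSA in the strongly concave case: under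
Assumptions A, B, C-1, with `γ^r = 0` and constant `β^r = β > 0`,
`ℓ(x^{r+1}, y^r) − ℓ(x^r, y^r) ≤ −Σᵢ (β + μᵢ − L_{xᵢ}/2) ‖x_i^{r+1} − x_i^r‖²`,
where `ℓ(x,y) = f(x,y) + Σᵢ hᵢ(xᵢ) − g(y)`. -/
theorem hibsa_descent_x
    {N K M : ℕ}
    -- Assumption A
    (f : XVec N K → YVec M → ℝ)
    (Xi : Fin K → Set (Blk N)) (hXiconv : ∀ i, Convex ℝ (Xi i))
    (hXicomp : ∀ i, IsCompact (Xi i))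
    (Y : Set (YVec M)) (hYconv : Convex ℝ Y) (hYcomp : IsCompact Y)
    (h : Fin K → Blk N → ℝ) (hhconv : ∀ i, ConvexOn ℝ Set.univ (h i))
    (g : YVec M → ℝ) (hgconv : ConvexOn ℝ Set.univ g)
    (Gfx : XVec N K → YVec M → XVec N K)
    (hGfx : ∀ x y, HasGradientAt (fun z => f z y) (Gfx x y) x)
    (Gfy : XVec N K → YVec M → YVec M)
    (hGfy : ∀ x y, HasGradientAt (fun z => f x z) (Gfy x y) y)
    (Lx : Fin K → ℝ)
    (hLx : ∀ (i : Fin K) (y : YVec M), y ∈ Y → ∀ x x' : XVec N K,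
      (∀ j, x j ∈ Xi j) → (∀ j, x' j ∈ Xi j) →
      ‖Gfx x' y i - Gfx x y i‖ ≤ Lx i * ‖x' - x‖)
    (Ly : ℝ)
    (hLy : ∀ (x x' : XVec N K) (y y' : YVec M),
      (∀ j, x j ∈ Xi j) → (∀ j, x' j ∈ Xi j) → y ∈ Y → y' ∈ Y →
      ‖Gfy x' y' - Gfy x y‖ ≤ Ly * Real.sqrt (‖x' - x‖ ^ 2 + ‖y' - y‖ ^ 2))
    -- Assumption B
    (U : Fin K → Blk N → XVec N K → YVec M → ℝ)
    (GU : Fin K → Blk N → XVec N K → YVec M → Blk N)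
    (hGU : ∀ i z w y, HasGradientAt (fun u => U i u w y) (GU i z w y) z)
    (μ : Fin K → ℝ) (hμpos : ∀ i, 0 < μ i)
    (hB1 : ∀ (i : Fin K) (w : XVec N K) (y : YVec M), y ∈ Y →
      ∀ z z' : Blk N, z ∈ Xi i → z' ∈ Xi i →
      ⟪GU i z' w y, z - z'⟫ + μ i / 2 * ‖z - z'‖ ^ 2 ≤ U i z w y - U i z' w y)
    (hB2 : ∀ (i : Fin K) (x : XVec N K) (y : YVec M),
      (∀ j, x j ∈ Xi j) → y ∈ Y → GU i (x i) x y = Gfx x y i)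
    (hB3 : ∀ (i : Fin K) (x : XVec N K) (y : YVec M),
      (∀ j, x j ∈ Xi j) → y ∈ Y →
      (∀ z ∈ Xi i, f (blockUpdate x i z) y ≤ U i z x y) ∧ U i (x i) x y = f x y)
    (Lu : Fin K → ℝ)
    (hB4 : ∀ (i : Fin K) (w : XVec N K) (y : YVec M) (z z' : Blk N),
      ‖GU i z w y - GU i z' w y‖ ≤ Lu i * ‖z - z'‖)
    -- Assumption C-1 (θ-strong concavity in y)
    (θ : ℝ) (hθ : 1 < θ)
    (hC1 : ∀ (x : XVec N K) (y z : YVec M), (∀ j, x j ∈ Xi j) → y ∈ Y → z ∈ Y →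
      f x z - f x y ≤ ⟪Gfy x y, z - y⟫ - θ / 2 * ‖z - y‖ ^ 2)
    -- HiBSA iterates (strongly concave case: γ^r = 0, β^r = β)
    (ρ β : ℝ) (hρ : 0 < ρ) (hβ : 0 < β)
    (xs : ℕ → XVec N K) (ys : ℕ → YVec M)
    (hx0 : ∀ j, xs 0 j ∈ Xi j) (hy0 : ys 0 ∈ Y)
    (hxup : ∀ (r : ℕ) (i : Fin K),
      xs (r + 1) i ∈ Xi i ∧
      ∀ z ∈ Xi i,
        U i (xs (r + 1) i) (hibsaW xs r i) (ys r) + h i (xs (r + 1) i)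
            + β / 2 * ‖xs (r + 1) i - xs r i‖ ^ 2
          ≤ U i z (hibsaW xs r i) (ys r) + h i z + β / 2 * ‖z - xs r i‖ ^ 2)
    (hyup : ∀ r : ℕ,
      ys (r + 1) ∈ Y ∧
      ∀ u ∈ Y,
        ⟪Gfy (xs (r + 1)) (ys r), u - ys r⟫ - 1 / (2 * ρ) * ‖u - ys r‖ ^ 2 - g u
          ≤ ⟪Gfy (xs (r + 1)) (ys r), ys (r + 1) - ys r⟫
              - 1 / (2 * ρ) * ‖ys (r + 1) - ys r‖ ^ 2 - g (ys (r + 1))) :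
    -- conclusion: descent estimate on the x-blocks
    ∀ r : ℕ,
      (f (xs (r + 1)) (ys r) + ∑ i, h i (xs (r + 1) i) - g (ys r))
          - (f (xs r) (ys r) + ∑ i, h i (xs r i) - g (ys r))
        ≤ -∑ i, (β + μ i - Lx i / 2) * ‖xs (r + 1) i - xs r i‖ ^ 2 := by
  intro r
  have hxfeas : ∀ s (j : Fin K), xs s j ∈ Xi j := by
    intro s
    induction s with
    | zero => exact hx0
    | succ n ih => exact fun j => (hxup n j).1
  have hyfeas : ∀ s, ys s ∈ Y := by
    intro s
    induction s with
    | zero => exact hy0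
    | succ n ih => exact (hyup n).1
  set W : ℕ → XVec N K := fun n => WithLp.toLp 2 (fun j : Fin K => if (j : ℕ) < n then xs (r + 1) j else xs r j)
    with hWdef
  have hWfeas : ∀ (n : ℕ) (j : Fin K), W n j ∈ Xi j := by
    intro n j
    show (if (j : ℕ) < n then xs (r + 1) j else xs r j) ∈ Xi j
    split
    · exact hxfeas (r + 1) j
    · exact hxfeas r j
  have hWK : W K = xs (r + 1) := by
    refine PiLp.ext fun j => ?_
    show (if (j : ℕ) < K then xs (r + 1) j else xs r j) = xs (r + 1) j
    simp [j.isLt]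
  have hW0 : W 0 = xs r := by
    refine PiLp.ext fun j => ?_
    show (if (j : ℕ) < 0 then xs (r + 1) j else xs r j) = xs r j
    simp
  have hWi : ∀ i : Fin K, W (i : ℕ) i = xs r i := by
    intro i
    show (if (i : ℕ) < (i : ℕ) then xs (r + 1) i else xs r i) = xs r i
    simp
  have hWsucc : ∀ i : Fin K, W ((i : ℕ) + 1) = blockUpdate (W (i : ℕ)) i (xs (r + 1) i) := by
    intro i
    refine PiLp.ext fun j => ?_
    show (if (j : ℕ) < (i : ℕ) + 1 then xs (r + 1) j else xs r j)
      = Function.update (W (i : ℕ)) i (xs (r + 1) i) j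
    rcases eq_or_ne j i with rfl | hj
    · rw [Function.update_self]
      simp
    · have hj' : (j : ℕ) ≠ (i : ℕ) := fun hh => hj (Fin.ext hh)
      rw [Function.update_of_ne hj]
      show _ = (if (j : ℕ) < (i : ℕ) then xs (r + 1) j else xs r j)
      have hiff : ((j : ℕ) < (i : ℕ) + 1) ↔ ((j : ℕ) < (i : ℕ)) := by omega
      simp only [hiff]
  have hWw : ∀ i : Fin K, hibsaW xs r i = W (i : ℕ) := fun i => rfl
  have key : ∀ i : Fin K,
      f (W ((i : ℕ) + 1)) (ys r) + h i (xs (r + 1) i)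
        - f (W (i : ℕ)) (ys r) - h i (xs r i)
      ≤ -((β + μ i - Lx i / 2) * ‖xs (r + 1) i - xs r i‖ ^ 2) := by
    intro i
    have hGcons : GU i (xs r i) (W (i : ℕ)) (ys r) = Gfx (W (i : ℕ)) (ys r) i := by
      have := hB2 i (W (i : ℕ)) (ys r) (hWfeas (i : ℕ)) (hyfeas r)
      rwa [hWi i] at this
    have hmin : ∀ z ∈ Xi i,
        U i (xs (r + 1) i) (W (i : ℕ)) (ys r) + h i (xs (r + 1) i)
            + β / 2 * ‖xs (r + 1) i - xs r i‖ ^ 2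
          ≤ U i z (W (i : ℕ)) (ys r) + h i z + β / 2 * ‖z - xs r i‖ ^ 2 := by
      intro z hz
      have := (hxup r i).2 z hz
      rwa [hWw i] at this
    have happ := per_block f Xi hXiconv h hhconv Gfx hGfx (Lx i) i (ys r)
      (fun z => U i z (W (i : ℕ)) (ys r)) (fun z => GU i z (W (i : ℕ)) (ys r))
      (fun z => hGU i z (W (i : ℕ)) (ys r))
      (μ i) (Lu i) β
      (fun z z' hz hz' => hB1 i (W (i : ℕ)) (ys r) (hyfeas r) z z' hz hz')
      (fun z z' => hB4 i (W (i : ℕ)) (ys r) z z')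
      (W (i : ℕ)) (hWfeas (i : ℕ))
      (xs r i) (xs (r + 1) i) (hWi i) (hxfeas r i) (hxup r i).1
      hGcons
      (fun x x' hx hx' => hLx i (ys r) (hyfeas r) x x' hx hx')
      hmin
    rw [← hWsucc i] at happ
    linarith [happ]
  have hsum := Finset.sum_le_sum (fun i (_ : i ∈ Finset.univ) => key i)
  have htel : ∑ i : Fin K,
      (f (W ((i : ℕ) + 1)) (ys r) + h i (xs (r + 1) i)
        - f (W (i : ℕ)) (ys r) - h i (xs r i))
      = (f (xs (r + 1)) (ys r) + ∑ i, h i (xs (r + 1) i))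
        - (f (xs r) (ys r) + ∑ i, h i (xs r i)) := by
    have h1 : ∑ i : Fin K, (f (W ((i : ℕ) + 1)) (ys r) - f (W (i : ℕ)) (ys r))
        = f (W K) (ys r) - f (W 0) (ys r) := by
      rw [Fin.sum_univ_eq_sum_range (fun n => f (W (n + 1)) (ys r) - f (W n) (ys r)) K]
      exact Finset.sum_range_sub (fun n => f (W n) (ys r)) K
    have h2 : ∑ i : Fin K,
        (f (W ((i : ℕ) + 1)) (ys r) + h i (xs (r + 1) i)
          - f (W (i : ℕ)) (ys r) - h i (xs r i))
        = ∑ i : Fin K, (f (W ((i : ℕ) + 1)) (ys r) - f (W (i : ℕ)) (ys r))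
          + ∑ i : Fin K, (h i (xs (r + 1) i) - h i (xs r i)) := by
      rw [← Finset.sum_add_distrib]
      apply Finset.sum_congr rfl
      intro i _
      ring
    rw [h2, h1, hWK, hW0, Finset.sum_sub_distrib]
    ring
  rw [htel] at hsum
  have h3 : ∑ i : Fin K, -((β + μ i - Lx i / 2) * ‖xs (r + 1) i - xs r i‖ ^ 2)
      = -∑ i : Fin K, (β + μ i - Lx i / 2) * ‖xs (r + 1) i - xs r i‖ ^ 2 :=
    Finset.sum_neg_distrib _
  rw [h3] at hsum
  linarith [hsum]
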